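/- Let A = L̄ E Ū be a factorization of an m×n matrix A over a field, where L̄ is invertible unit lower triangular, Ū is invertible upper triangular, and E is an m×n 0-1 matrix with at most one 1 in each row and each column. Then the row rank profile of A is the sorted sequence of row indices of the nonzero rows of E, and the column rank profile of A is the sorted sequence of column indices of the nonzero columns of E. -/

import Mathlib

open Matrix

/-- `l` is the row rank profile of `A`: the lexicographically smallest sorted list of
`rank A` row indices whose corresponding rows are linearly independent. -/
def IsRowRankProfile (F : Type*) [Field F] {m n : ℕ}
    (A : Matrix (Fin m) (Fin n) F) (l : List (Fin m)) : Prop :=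
  l.Pairwise (· < ·) ∧ l.length = A.rank ∧
  LinearIndependent F (fun i : {x : Fin m // x ∈ l} => A i.val) ∧
  ∀ l' : List (Fin m), l'.Pairwise (· < ·) → l'.length = A.rank →
    LinearIndependent F (fun i : {x : Fin m // x ∈ l'} => A i.val) →
    l = l' ∨ List.Lex (· < ·) l l'

/-- `l` is the column rank profile of `A`. -/
def IsColRankProfile (F : Type*) [Field F] {m n : ℕ}
    (A : Matrix (Fin m) (Fin n) F) (l : List (Fin n)) : Prop :=
  l.Pairwise (· < ·) ∧ l.length = A.rank ∧
  LinearIndependent F (fun j : {x : Fin n // x ∈ l} => Aᵀ j.val) ∧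
  ∀ l' : List (Fin n), l'.Pairwise (· < ·) → l'.length = A.rank →
    LinearIndependent F (fun j : {x : Fin n // x ∈ l'} => Aᵀ j.val) →
    l = l' ∨ List.Lex (· < ·) l l'

/-- Combinatorial lemma: pointwise domination of sorted-get implies lex ≤. -/
lemma eq_or_lex_of_pointwise {α : Type*} [LinearOrder α] :
    ∀ (l l' : List α), l.length = l'.length →
      (∀ (k : ℕ) (h : k < l.length) (h' : k < l'.length), l.get ⟨k, h⟩ ≤ l'.get ⟨k, h'⟩) →
      l = l' ∨ List.Lex (· < ·) l l'
  | [], [], _, _ => Or.inl rfl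
  | [], _ :: _, h, _ => by simp at h
  | _ :: _, [], h, _ => by simp at h
  | a :: t, a' :: t', h, hk => by
      rcases lt_or_eq_of_le (hk 0 (by simp) (by simp)) with hlt | heq
      · exact Or.inr (List.Lex.rel hlt)
      · cases heq
        rcases eq_or_lex_of_pointwise t t' (by simpa using h)
          (fun k hk1 hk2 => hk (k + 1) (by simpa using Nat.succ_lt_succ hk1)
            (by simpa using Nat.succ_lt_succ hk2)) with h1 | h1
        · exact Or.inl (by rw [h1])
        · exact Or.inr (List.Lex.cons h1)

/-- Counting lemma for sorted lists from Finsets. -/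
lemma sort_get_le {α : Type*} [LinearOrder α] (S : Finset α) (b : α) (k : ℕ)
    (h : k < (S.sort (· ≤ ·)).length) [DecidablePred (· ≤ b)]
    (hcard : k + 1 ≤ (S.filter (· ≤ b)).card) :
    (S.sort (· ≤ ·)).get ⟨k, h⟩ ≤ b := by
  classical
  by_contra hb
  push_neg at hb
  set l := S.sort (· ≤ ·) with hl
  have hsorted : l.Pairwise (· < ·) := S.sortedLT_sort.pairwise
  have hmono : Monotone l.get := hsorted.sortedLT.strictMono_get.monotone
  have hsub : S.filter (· ≤ b) ⊆ (l.take k).toFinset := by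
    intro x hx
    obtain ⟨hxS, hxb⟩ := Finset.mem_filter.mp hx
    have hxl : x ∈ l := (Finset.mem_sort _).mpr hxS
    have hxapp : x ∈ l.take k ++ l.drop k := by
      rw [List.take_append_drop]; exact hxl
    rw [List.mem_toFinset]
    rcases List.mem_append.mp hxapp with h1 | h1
    · exact h1
    · exfalso
      obtain ⟨j, hj, hjx⟩ := List.mem_iff_getElem.mp h1
      have hj' : k + j < l.length := by
        have := hj; rw [List.length_drop] at this; omega
      have hge : l.get ⟨k, h⟩ ≤ l.get ⟨k + j, hj'⟩ := hmono (by simp)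
      rw [List.getElem_drop] at hjx
      have : l.get ⟨k + j, hj'⟩ = x := by
        rw [List.get_eq_getElem]; exact hjx
      rw [this] at hge
      exact absurd hxb (not_le.mpr (lt_of_lt_of_le hb hge))
  have h1 : (S.filter (· ≤ b)).card ≤ (l.take k).toFinset.card := Finset.card_le_card hsub
  have h2 : (l.take k).toFinset.card ≤ (l.take k).length := List.toFinset_card_le _
  have h3 : (l.take k).length ≤ k := by rw [List.length_take]; omega
  omega

open scoped Classical in
theorem isRowRankProfile_LEU {F : Type*} [Field F] {m n : ℕ}
    (A : Matrix (Fin m) (Fin n) F)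
    (L : Matrix (Fin m) (Fin m) F) (E : Matrix (Fin m) (Fin n) F)
    (U : Matrix (Fin n) (Fin n) F)
    (hLtri : ∀ i j : Fin m, i < j → L i j = 0) (hLdiag : ∀ i : Fin m, L i i ≠ 0)
    (hU : IsUnit U)
    (hE01 : ∀ (i : Fin m) (j : Fin n), E i j = 0 ∨ E i j = 1)
    (hErow : ∀ (i : Fin m) (j j' : Fin n), E i j ≠ 0 → E i j' ≠ 0 → j = j')
    (hEcol : ∀ (j : Fin n) (i i' : Fin m), E i j ≠ 0 → E i' j ≠ 0 → i = i')
    (hA : A = L * E * U) :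
    IsRowRankProfile F A ((Finset.univ.filter fun i : Fin m => E i ≠ 0).sort (· ≤ ·)) := by
  set S := Finset.univ.filter fun i : Fin m => E i ≠ 0 with hSdef
  have hex : ∀ i : Fin m, i ∈ S → ∃ j, E i j ≠ 0 := by
    intro i hi
    have h2 := (Finset.mem_filter.mp hi).2
    rwa [Function.ne_iff] at h2
  choose σ hσ using hex
  have hσ1 : ∀ i hi, E i (σ i hi) = 1 := fun i hi => (hE01 i _).resolve_left (hσ i hi)
  -- rows of E * U
  have hEU0 : ∀ k, k ∉ S → (E * U) k = 0 := by
    intro k hk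
    have hEk : E k = 0 := by
      by_contra h
      exact hk (Finset.mem_filter.mpr ⟨Finset.mem_univ _, h⟩)
    funext j
    simp [Matrix.mul_apply, hEk]
  have hEU1 : ∀ k (hk : k ∈ S), (E * U) k = U (σ k hk) := by
    intro k hk
    funext j
    rw [Matrix.mul_apply, Finset.sum_eq_single (σ k hk)]
    · rw [hσ1 k hk, one_mul]
    · intro t _ ht
      have hEkt : E k t = 0 := by
        by_contra h
        exact ht (hErow k t _ h (hσ k hk))
      rw [hEkt, zero_mul]
    · intro h; exact absurd (Finset.mem_univ _) h
  -- rows of A lie in the span of rows of E*U with index in S up to x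
  have hAx : ∀ x : Fin m,
      A x ∈ Submodule.span F ((fun k => (E * U) k) '' {k : Fin m | k ∈ S ∧ k ≤ x}) := by
    intro x
    have hAx' : A x = ∑ k : Fin m, L x k • (E * U) k := by
      funext j
      rw [hA, Matrix.mul_assoc]
      simp [Matrix.mul_apply, Finset.sum_apply]
    rw [hAx']
    apply Submodule.sum_mem
    intro k _
    by_cases hk : k ∈ S
    · by_cases hkx : k ≤ x
      · exact Submodule.smul_mem _ _ (Submodule.subset_span ⟨k, ⟨hk, hkx⟩, rfl⟩)
      · rw [hLtri x k (lt_of_not_ge hkx), zero_smul]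
        exact Submodule.zero_mem _
    · rw [hEU0 k hk, smul_zero]
      exact Submodule.zero_mem _
  -- the dimension-count bound
  have cardle : ∀ (T : Finset (Fin m)) (b : Fin m), (∀ x ∈ T, x ≤ b) →
      LinearIndependent F (fun x : {y // y ∈ T} => A x.1) →
      T.card ≤ (S.filter (· ≤ b)).card := by
    intro T b hTb hTind
    set G : Finset (Fin n → F) := (S.filter (· ≤ b)).image (fun k => (E * U) k) with hG
    set W : Submodule F (Fin n → F) := Submodule.span F (G : Set (Fin n → F)) with hW
    have hmem : ∀ x : {y // y ∈ T}, A x.1 ∈ W := by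
      intro x
      refine Submodule.span_mono ?_ (hAx x.1)
      rintro _ ⟨k, ⟨hk1, hk2⟩, rfl⟩
      exact Finset.mem_coe.mpr (Finset.mem_image.mpr
        ⟨k, Finset.mem_filter.mpr ⟨hk1, le_trans hk2 (hTb x.1 x.2)⟩, rfl⟩)
    have hv : LinearIndependent F (fun x : {y // y ∈ T} => (⟨A x.1, hmem x⟩ : W)) :=
      LinearIndependent.of_comp W.subtype hTind
    calc T.card = Fintype.card {y // y ∈ T} := (Fintype.card_coe T).symm
      _ ≤ Module.finrank F W := hv.fintype_card_le_finrank
      _ ≤ G.card := finrank_span_finset_le_card G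
      _ ≤ (S.filter (· ≤ b)).card := Finset.card_image_le
  -- linear independence of the rows of A indexed by S
  have hindS : LinearIndependent F (fun i : {x // x ∈ S} => A i.1) := by
    rw [Fintype.linearIndependent_iff]
    intro g hg i0
    set c : Fin m → F := fun i => if h : i ∈ S then g ⟨i, h⟩ else 0 with hc
    have hsum : ∑ i : Fin m, c i • A i = 0 := by
      rw [← hg]
      calc ∑ i : Fin m, c i • A i
          = ∑ i ∈ S, c i • A i :=
            (Finset.sum_subset (Finset.subset_univ S) (fun i _ hi => by simp [hc, hi])).symm
        _ = ∑ i : {x // x ∈ S}, c i.1 • A i.1 := (Finset.sum_coe_sort S _).symm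
        _ = ∑ i : {x // x ∈ S}, g i • A i.1 :=
            Finset.sum_congr rfl (fun i _ => by simp [hc, i.2])
    have hvec : Matrix.vecMul c A = 0 := by
      funext j
      have := congrFun hsum j
      simpa [Matrix.vecMul, dotProduct, Finset.sum_apply] using this
    rw [hA, ← Matrix.vecMul_vecMul, ← Matrix.vecMul_vecMul] at hvec
    have hd : Matrix.vecMul (Matrix.vecMul c L) E = 0 := by
      have hinj := Matrix.vecMul_injective_iff_isUnit.mpr hU
      apply hinj
      show Matrix.vecMul _ U = Matrix.vecMul 0 U
      rw [Matrix.zero_vecMul]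
      exact hvec
    have hdS : ∀ i (hi : i ∈ S), Matrix.vecMul c L i = 0 := by
      intro i hi
      have h0 := congrFun hd (σ i hi)
      have h1 : ∑ k : Fin m, Matrix.vecMul c L k * E k (σ i hi) = 0 := by
        simpa [Matrix.vecMul, dotProduct] using h0
      rw [Finset.sum_eq_single i] at h1
      · rwa [hσ1 i hi, mul_one] at h1
      · intro k _ hki
        have : E k (σ i hi) = 0 := by
          by_contra hne
          exact hki (hEcol _ _ _ hne (hσ i hi))
        rw [this, mul_zero]
      · intro h; exact absurd (Finset.mem_univ _) h
    have key : ∀ t : ℕ, ∀ i : Fin m, m ≤ t + i.1 → c i = 0 := by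
      intro t
      induction t with
      | zero => intro i hi; exact absurd hi (by have := i.isLt; omega)
      | succ t ih =>
        intro i hi
        by_cases hiS : i ∈ S
        · have hd0 := hdS i hiS
          have h1 : ∑ k : Fin m, c k * L k i = 0 := by
            simpa [Matrix.vecMul, dotProduct] using hd0
          rw [Finset.sum_eq_single i] at h1
          · exact (mul_eq_zero.mp h1).resolve_right (hLdiag i)
          · intro k _ hki
            rcases lt_or_gt_of_ne hki with hlt | hgt
            · rw [hLtri k i hlt, mul_zero]
            · have hk0 : c k = 0 := ih k (by have := (Fin.lt_def.mp hgt); omega)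
              rw [hk0, zero_mul]
          · intro h; exact absurd (Finset.mem_univ _) h
        · simp [hc, hiS]
    have hci : c i0.1 = 0 := key m i0.1 (by omega)
    rw [hc] at hci
    simpa [i0.2] using hci
    -- rank of A
  have hrank : A.rank = S.card := by
    rw [Matrix.rank_eq_finrank_span_row]
    apply le_antisymm
    · have hsub : Submodule.span F (Set.range A) ≤
          Submodule.span F ((S.image (fun k => (E * U) k) : Finset (Fin n → F)) : Set (Fin n → F)) := by
        rw [Submodule.span_le]
        rintro _ ⟨x, rfl⟩
        refine Submodule.span_mono ?_ (hAx x)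
        rintro _ ⟨k, ⟨hk1, _⟩, rfl⟩
        exact Finset.mem_coe.mpr (Finset.mem_image.mpr ⟨k, hk1, rfl⟩)
      calc Module.finrank F (Submodule.span F (Set.range A))
          ≤ Module.finrank F (Submodule.span F
              ((S.image (fun k => (E * U) k) : Finset (Fin n → F)) : Set (Fin n → F))) :=
            Submodule.finrank_mono hsub
        _ ≤ (S.image (fun k => (E * U) k)).card := finrank_span_finset_le_card _
        _ ≤ S.card := Finset.card_image_le
    · have hmem : ∀ i : {x // x ∈ S}, A i.1 ∈ Submodule.span F (Set.range A) :=
        fun i => Submodule.subset_span ⟨i.1, rfl⟩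
      have hv : LinearIndependent F (fun i : {x // x ∈ S} =>
          (⟨A i.1, hmem i⟩ : Submodule.span F (Set.range A))) :=
        LinearIndependent.of_comp (Submodule.span F (Set.range A)).subtype hindS
      exact (by simpa [Fintype.card_coe] using hv.fintype_card_le_finrank :
        S.card ≤ Module.finrank F (Submodule.span F (Set.range A)))
  set l := S.sort (· ≤ ·) with hldef
  have hlsorted : l.Pairwise (· < ·) := S.sortedLT_sort.pairwise
  have hllen : l.length = A.rank := by rw [hldef, Finset.length_sort, hrank]
  refine ⟨hlsorted, hllen, ?_, ?_⟩
  · exact hindS.comp (fun x : {x : Fin m // x ∈ l} => ⟨x.1, (Finset.mem_sort _).mp x.2⟩)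
      (fun a b h => by simpa [Subtype.ext_iff] using h)
  · intro l' hl's hl'len hl'ind
    apply eq_or_lex_of_pointwise
    · rw [hllen, hl'len]
    · intro k hk hk'
      set b := l'.get ⟨k, hk'⟩ with hb
      have hl'mono : Monotone l'.get := hl's.sortedLT.strictMono_get.monotone
      set T : Finset (Fin m) := (l'.take (k + 1)).toFinset with hT
      have hTsub : ∀ x ∈ T, x ∈ l' := fun x hx =>
        List.mem_of_mem_take (List.mem_toFinset.mp hx)
      have hTb : ∀ x ∈ T, x ≤ b := by
        intro x hx
        obtain ⟨j, hj, hjx⟩ := List.mem_iff_getElem.mp (List.mem_toFinset.mp hx)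
        have hjk : j < k + 1 := by rw [List.length_take] at hj; omega
        have hjlen : j < l'.length := by rw [List.length_take] at hj; omega
        have hx' : x = l'.get ⟨j, hjlen⟩ := by
          rw [List.get_eq_getElem, ← hjx, List.getElem_take]
        rw [hx', hb]
        exact hl'mono (Fin.mk_le_mk.mpr (by omega))
      have hTnodup : (l'.take (k + 1)).Nodup := (List.take_sublist _ _).nodup hl's.sortedLT.nodup
      have hTcard : T.card = k + 1 := by
        rw [hT, List.toFinset_card_of_nodup hTnodup, List.length_take]
        omega
      have hTind : LinearIndependent F (fun x : {y // y ∈ T} => A x.1) := by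
        exact hl'ind.comp (fun x : {y // y ∈ T} => (⟨x.1, hTsub x.1 x.2⟩ : {x // x ∈ l'}))
          (fun a b h => Subtype.ext (by have := congrArg Subtype.val h; exact this))
      have hcb := cardle T b hTb hTind
      rw [hTcard] at hcb
      exact sort_get_le S b k hk hcb

open scoped Classical in
theorem rankProfiles_of_LEU (F : Type*) [Field F] {m n : ℕ}
    (A : Matrix (Fin m) (Fin n) F)
    (L : Matrix (Fin m) (Fin m) F) (E : Matrix (Fin m) (Fin n) F)
    (U : Matrix (Fin n) (Fin n) F)
    (hLtri : ∀ i j : Fin m, i < j → L i j = 0) (hLdiag : ∀ i : Fin m, L i i = 1)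
    (hL : IsUnit L)
    (hUtri : ∀ i j : Fin n, j < i → U i j = 0) (hU : IsUnit U)
    (hE01 : ∀ (i : Fin m) (j : Fin n), E i j = 0 ∨ E i j = 1)
    (hErow : ∀ (i : Fin m) (j j' : Fin n), E i j ≠ 0 → E i j' ≠ 0 → j = j')
    (hEcol : ∀ (j : Fin n) (i i' : Fin m), E i j ≠ 0 → E i' j ≠ 0 → i = i')
    (hA : A = L * E * U) :
    IsRowRankProfile F A ((Finset.univ.filter fun i : Fin m => E i ≠ 0).sort (· ≤ ·)) ∧
    IsColRankProfile F A ((Finset.univ.filter fun j : Fin n => Eᵀ j ≠ 0).sort (· ≤ ·)) := by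
  constructor
  · exact isRowRankProfile_LEU A L E U hLtri
      (fun i => by rw [hLdiag i]; exact one_ne_zero) hU hE01 hErow hEcol hA
  · have hAT : Aᵀ = Uᵀ * Eᵀ * Lᵀ := by
      rw [hA, Matrix.transpose_mul, Matrix.transpose_mul, Matrix.mul_assoc]
    have hdetU : U.det ≠ 0 := by
      simpa [isUnit_iff_ne_zero] using (Matrix.isUnit_iff_isUnit_det U).mp hU
    have hdet : U.det = ∏ i, U i i :=
      Matrix.det_of_upperTriangular (by intro i j hij; exact hUtri i j hij)
    have hUdiag : ∀ i : Fin n, Uᵀ i i ≠ 0 := by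
      intro i
      have h0 : ∏ j, U j j ≠ 0 := hdet ▸ hdetU
      have := Finset.prod_ne_zero_iff.mp h0 i (Finset.mem_univ i)
      simpa [Matrix.transpose_apply] using this
    have h := isRowRankProfile_LEU Aᵀ Uᵀ Eᵀ Lᵀ
      (fun i j hij => hUtri j i hij)
      hUdiag
      ((Matrix.isUnit_transpose L).mpr hL)
      (fun i j => hE01 j i) (fun i j j' => hEcol i j j') (fun j i i' => hErow j i i')
      hAT
    rw [IsRowRankProfile] at h
    rw [IsColRankProfile, ← Matrix.rank_transpose A]
    exact h
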